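/- Consider the Riemannian AR(1) Markov chain x_{t+1} = x_t #_μ y_{t+1} on a Hadamard manifold M, where y_{t+1} ~ P i.i.d., P has finite second moments, x* is the Riemannian barycentre of P, and V(x) = d²(x*, x)/2. Then the one-step transition kernel satisfies the drift inequality Q_μ V(x) ≤ (1−μ)² V(x) + μ² E(x*) for all x ∈ M, where E(x) = (1/2)∫ d²(x,y) P(dy). -/

import Mathlib

open MeasureTheory

/-- A Hadamard space: a complete geodesic metric space satisfying the CAT(0)
(non-positive curvature) comparison inequality.  This abstracts a Hadamard manifold;
`geo x y μ` is the geodesic convex combination `x #_μ y`. -/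
class HadamardSpace (M : Type*) extends MetricSpace M where
  geo : M → M → ℝ → M
  geo_zero : ∀ x y : M, geo x y 0 = x
  geo_one : ∀ x y : M, geo x y 1 = y
  geo_dist : ∀ x y : M, ∀ s ∈ Set.Icc (0:ℝ) 1, ∀ t ∈ Set.Icc (0:ℝ) 1,
    dist (geo x y s) (geo x y t) = |s - t| * dist x y
  cat0 : ∀ x y z : M, ∀ t ∈ Set.Icc (0:ℝ) 1,
    dist (geo x y t) z ^ 2 ≤
      (1 - t) * dist x z ^ 2 + t * dist y z ^ 2 - t * (1 - t) * dist x y ^ 2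
  complete : CompleteSpace M

/-- Drift inequality for the Riemannian AR(1) model `x_{t+1} = x_t #_μ y_{t+1}` on a
Hadamard manifold `M`, with i.i.d. inputs `y ~ P`, where `P` has finite second moments and
Riemannian barycentre `x*` (the global minimiser of `E(x) = (1/2)∫ d²(x,y) P(dy)`).
With `V(x) = d²(x*,x)/2`, the one-step transition kernel satisfies
`Q_μ V(x) = 𝔼[V(x #_μ y)] ≤ (1−μ)² V(x) + μ² E(x*)` for every `x ∈ M` and `μ ∈ (0,1)`. -/
theorem stmt18 {M : Type*} [HadamardSpace M] [MeasurableSpace M] [BorelSpace M]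
    (P : Measure M) [IsProbabilityMeasure P]
    (hmom : ∀ x : M, Integrable (fun y => dist x y ^ 2) P)
    (xstar : M)
    (hbary : ∀ x : M, ((1:ℝ)/2) * (∫ y, dist xstar y ^ 2 ∂P) ≤ (1/2) * ∫ y, dist x y ^ 2 ∂P)
    (μ : ℝ) (hμ : μ ∈ Set.Ioo (0:ℝ) 1) (x : M) :
    (∫ y, dist xstar (HadamardSpace.geo x y μ) ^ 2 / 2 ∂P)
      ≤ (1 - μ) ^ 2 * (dist xstar x ^ 2 / 2) + μ ^ 2 * ((1/2) * ∫ y, dist xstar y ^ 2 ∂P) := by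
  obtain ⟨hμ0, hμ1⟩ := hμ
  set A : ℝ := dist xstar x ^ 2 with hA
  set B : ℝ := ∫ y, dist xstar y ^ 2 ∂P with hB
  set C : ℝ := ∫ y, dist x y ^ 2 ∂P with hC
  have hintB : Integrable (fun y => dist xstar y ^ 2) P := hmom xstar
  have hintC : Integrable (fun y => dist x y ^ 2) P := hmom x
  have hAnn : 0 ≤ A := sq_nonneg _
  -- Variance inequality: A + B ≤ C
  have hstep : ∀ t : ℝ, 0 ≤ t → t < 1 → t * A ≤ C - B := by
    intro t ht0 ht1
    have htIcc : t ∈ Set.Icc (0:ℝ) 1 := ⟨ht0, ht1.le⟩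
    have hint_g : Integrable
        (fun y => (1 - t) * dist x y ^ 2 + t * dist xstar y ^ 2 - t * (1 - t) * A) P :=
      ((hintC.const_mul _).add (hintB.const_mul _)).sub (integrable_const _)
    have hmono : (∫ y, dist (HadamardSpace.geo x xstar t) y ^ 2 ∂P)
        ≤ ∫ y, ((1 - t) * dist x y ^ 2 + t * dist xstar y ^ 2 - t * (1 - t) * A) ∂P := by
      apply integral_mono_of_nonneg
      · exact Filter.Eventually.of_forall fun y => sq_nonneg _
      · exact hint_g
      · refine Filter.Eventually.of_forall fun y => ?_
        have h := HadamardSpace.cat0 x xstar y t htIcc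
        rw [dist_comm x xstar] at h
        simpa using h
    have hi1 : Integrable (fun y => (1 - t) * dist x y ^ 2) P := hintC.const_mul _
    have hi2 : Integrable (fun y => t * dist xstar y ^ 2) P := hintB.const_mul _
    have hi12 : Integrable (fun y => (1 - t) * dist x y ^ 2 + t * dist xstar y ^ 2) P :=
      hi1.add hi2
    have hcalc : (∫ y, ((1 - t) * dist x y ^ 2 + t * dist xstar y ^ 2 - t * (1 - t) * A) ∂P)
        = (1 - t) * C + t * B - t * (1 - t) * A := by
      have e1 : (∫ y, ((1 - t) * dist x y ^ 2 + t * dist xstar y ^ 2 - t * (1 - t) * A) ∂P)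
          = (∫ y, ((1 - t) * dist x y ^ 2 + t * dist xstar y ^ 2) ∂P)
            - ∫ _y, (t * (1 - t) * A) ∂P := integral_sub hi12 (integrable_const _)
      have e2 : (∫ y, ((1 - t) * dist x y ^ 2 + t * dist xstar y ^ 2) ∂P)
          = (∫ y, (1 - t) * dist x y ^ 2 ∂P) + ∫ y, t * dist xstar y ^ 2 ∂P :=
        integral_add hi1 hi2
      rw [e1, e2, integral_const_mul, integral_const_mul, integral_const]
      simp [hB, hC]
    have hbar := hbary (HadamardSpace.geo x xstar t)
    have hBle : B ≤ (1 - t) * C + t * B - t * (1 - t) * A := by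
      have : B ≤ ∫ y, dist (HadamardSpace.geo x xstar t) y ^ 2 ∂P := by linarith
      linarith [hmono, hcalc, this]
    have h1t : 0 < 1 - t := by linarith
    nlinarith [hBle, h1t]
  have key1 : A + B ≤ C := by
    have hCB : 0 ≤ C - B := by simpa using hstep 0 le_rfl one_pos
    by_contra hcon
    push_neg at hcon
    have hApos : 0 < A := by linarith
    set t : ℝ := ((C - B) + A) / (2 * A) with htdef
    have ht0 : 0 ≤ t := by positivity
    have ht1 : t < 1 := by
      rw [htdef, div_lt_one (by positivity)]
      linarith
    have htA : t * A = ((C - B) + A) / 2 := by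
      rw [htdef]; field_simp
    have := hstep t ht0 ht1
    rw [htA] at this
    linarith
  -- Pointwise CAT(0) bound under the integral
  have hint_g2 : Integrable
      (fun y => (1 - μ) * A + μ * dist xstar y ^ 2 - μ * (1 - μ) * dist x y ^ 2) P :=
    ((integrable_const _).add (hintB.const_mul _)).sub (hintC.const_mul _)
  have hmono2 : (∫ y, dist xstar (HadamardSpace.geo x y μ) ^ 2 ∂P)
      ≤ ∫ y, ((1 - μ) * A + μ * dist xstar y ^ 2 - μ * (1 - μ) * dist x y ^ 2) ∂P := by
    apply integral_mono_of_nonneg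
    · exact Filter.Eventually.of_forall fun y => sq_nonneg _
    · exact hint_g2
    · refine Filter.Eventually.of_forall fun y => ?_
      have h := HadamardSpace.cat0 x y xstar μ ⟨hμ0.le, hμ1.le⟩
      rw [dist_comm x xstar, dist_comm y xstar] at h
      show dist xstar (HadamardSpace.geo x y μ) ^ 2
          ≤ (1 - μ) * A + μ * dist xstar y ^ 2 - μ * (1 - μ) * dist x y ^ 2
      rw [dist_comm xstar (HadamardSpace.geo x y μ)]
      simpa using h
  have hj1 : Integrable (fun _y : M => (1 - μ) * A) P := integrable_const _
  have hj2 : Integrable (fun y => μ * dist xstar y ^ 2) P := hintB.const_mul _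
  have hj12 : Integrable (fun y => (1 - μ) * A + μ * dist xstar y ^ 2) P := hj1.add hj2
  have hj3 : Integrable (fun y => μ * (1 - μ) * dist x y ^ 2) P := hintC.const_mul _
  have hcalc2 : (∫ y, ((1 - μ) * A + μ * dist xstar y ^ 2 - μ * (1 - μ) * dist x y ^ 2) ∂P)
      = (1 - μ) * A + μ * B - μ * (1 - μ) * C := by
    have e1 : (∫ y, ((1 - μ) * A + μ * dist xstar y ^ 2 - μ * (1 - μ) * dist x y ^ 2) ∂P)
        = (∫ y, ((1 - μ) * A + μ * dist xstar y ^ 2) ∂P)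
          - ∫ y, μ * (1 - μ) * dist x y ^ 2 ∂P := integral_sub hj12 hj3
    have e2 : (∫ y, ((1 - μ) * A + μ * dist xstar y ^ 2) ∂P)
        = (∫ _y, ((1 - μ) * A) ∂P) + ∫ y, μ * dist xstar y ^ 2 ∂P := integral_add hj1 hj2
    rw [e1, e2, integral_const_mul, integral_const_mul, integral_const_mul, integral_const]
    simp [hB, hC]
  have hdiv : (∫ y, dist xstar (HadamardSpace.geo x y μ) ^ 2 / 2 ∂P)
      = (∫ y, dist xstar (HadamardSpace.geo x y μ) ^ 2 ∂P) / 2 := integral_div 2 _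
  rw [hdiv]
  have hμ1' : (0:ℝ) ≤ 1 - μ := by linarith
  nlinarith [hmono2, hcalc2, mul_nonneg (mul_nonneg hμ0.le hμ1') (by linarith : (0:ℝ) ≤ C - (A + B))]
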